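/- Let T : H ⇉ H be maximal monotone with zer T ≠ ∅. Let (M_k) and M be admissible preconditioners for T with M_k → M and ∑_k ‖M_{k+1} − M_k‖ < ∞, and suppose each (M_k + T)⁻¹ is L-Lipschitz. Then the iterates u^{k+1} = (M_k + T)⁻¹ M_k u^k converge weakly to some u ∈ zer T. -/

import Mathlib

open scoped InnerProductSpace
open Filter

/-- Weak convergence of x to l. -/
def WeakConv {H : Type} [NormedAddCommGroup H] [InnerProductSpace ℝ H]
    (x : ℕ → H) (l : H) : Prop :=
  ∀ w : H, Filter.Tendsto (fun n => ⟪x n, w⟫_ℝ) Filter.atTop (nhds ⟪l, w⟫_ℝ)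


section Aux
variable {H : Type} [NormedAddCommGroup H] [InnerProductSpace ℝ H]

lemma psd_cs (A : H →L[ℝ] H) (hsym : ∀ x y : H, ⟪A x, y⟫_ℝ = ⟪x, A y⟫_ℝ)
    (hpsd : ∀ x : H, 0 ≤ ⟪A x, x⟫_ℝ) (x y : H) :
    ⟪A x, y⟫_ℝ ^ 2 ≤ ⟪A x, x⟫_ℝ * ⟪A y, y⟫_ℝ := by
  have key : ∀ t : ℝ, 0 ≤ ⟪A y, y⟫_ℝ * (t * t) + (2 * ⟪A x, y⟫_ℝ) * t + ⟪A x, x⟫_ℝ := by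
    intro t
    have h0 := hpsd (x + t • y)
    have hyx : ⟪A y, x⟫_ℝ = ⟪A x, y⟫_ℝ := by
      rw [hsym y x, real_inner_comm]
    have expand : ⟪A (x + t • y), x + t • y⟫_ℝ
        = ⟪A y, y⟫_ℝ * (t * t) + (2 * ⟪A x, y⟫_ℝ) * t + ⟪A x, x⟫_ℝ := by
      simp only [map_add, map_smul, inner_add_left, inner_add_right,
        real_inner_smul_left, real_inner_smul_right, hyx]
      ring
    linarith [expand ▸ h0]
  have hd := discrim_le_zero key
  rw [discrim] at hd
  nlinarith [hd]

lemma psd_norm_sq (A : H →L[ℝ] H) (hsym : ∀ x y : H, ⟪A x, y⟫_ℝ = ⟪x, A y⟫_ℝ)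
    (hpsd : ∀ x : H, 0 ≤ ⟪A x, x⟫_ℝ) (x : H) :
    ‖A x‖ ^ 2 ≤ ‖A‖ * ⟪A x, x⟫_ℝ := by
  rcases eq_or_ne (A x) 0 with h | h
  · rw [h]; simp [mul_nonneg (norm_nonneg A) (hpsd x)]
  · have hcs := psd_cs A hsym hpsd x (A x)
    have h1 : ⟪A x, A x⟫_ℝ = ‖A x‖ ^ 2 := real_inner_self_eq_norm_sq (A x)
    have h2 : ⟪A (A x), A x⟫_ℝ ≤ ‖A (A x)‖ * ‖A x‖ := real_inner_le_norm _ _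
    have h3 : ‖A (A x)‖ ≤ ‖A‖ * ‖A x‖ := A.le_opNorm (A x)
    have h4 : (0:ℝ) < ‖A x‖ := norm_pos_iff.mpr h
    have h5 : ⟪A (A x), A x⟫_ℝ ≤ ‖A‖ * ‖A x‖ * ‖A x‖ := by nlinarith [norm_nonneg (A (A x)), norm_nonneg (A x)]
    have h6 : ⟪A x, x⟫_ℝ * ⟪A (A x), A x⟫_ℝ ≤ ⟪A x, x⟫_ℝ * (‖A‖ * ‖A x‖ * ‖A x‖) :=
      mul_le_mul_of_nonneg_left h5 (hpsd x)
    nlinarith [hcs, h6, mul_pos h4 h4, hpsd x]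

end Aux

lemma quasiFejer (a ε : ℕ → ℝ) (ha : ∀ k, 0 ≤ a k) (hε : ∀ k, 0 ≤ ε k)
    (hsum : Summable ε) (hrec : ∀ k, a (k + 1) ≤ a k + ε k) :
    ∃ E, Tendsto a atTop (nhds E) := by
  set t : ℕ → ℝ := fun k => ∑' j, ε (j + k) with ht
  have hsumk : ∀ k, Summable fun j => ε (j + k) := fun k => (summable_nat_add_iff k).2 hsum
  have htnn : ∀ k, 0 ≤ t k := fun k => tsum_nonneg fun j => hε _
  have htsplit : ∀ k, t k = ε k + t (k + 1) := by
    intro k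
    have h0 := Summable.tsum_eq_zero_add (hsumk k)
    have h1 : (fun j => ε (j + 1 + k)) = fun j => ε (j + (k + 1)) := by
      funext j; congr 1; omega
    simp only [zero_add] at h0
    show (∑' j, ε (j + k)) = ε k + ∑' j, ε (j + (k+1))
    rw [h0, h1]
  set b : ℕ → ℝ := fun k => a k + t k with hb
  have hbmono : Antitone b := by
    apply antitone_nat_of_succ_le
    intro k
    have := hrec k
    have := htsplit k
    simp only [hb]; linarith
  have hbdd : BddBelow (Set.range b) := by
    refine ⟨0, ?_⟩
    rintro x ⟨k, rfl⟩
    exact add_nonneg (ha k) (htnn k)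
  have hbconv : Tendsto b atTop (nhds (⨅ k, b k)) := tendsto_atTop_ciInf hbmono hbdd
  have htz : Tendsto t atTop (nhds 0) := by
    have hpartial : Tendsto (fun k => ∑ i ∈ Finset.range k, ε i) atTop (nhds (∑' i, ε i)) :=
      hsum.hasSum.tendsto_sum_nat
    have heq : ∀ k, t k = (∑' i, ε i) - ∑ i ∈ Finset.range k, ε i := by
      intro k
      have := Summable.sum_add_tsum_nat_add (f := ε) k hsum
      have h2 : (∑ i ∈ Finset.range k, ε i) + (∑' i, ε (i + k)) = ∑' i, ε i := this
      show (∑' j, ε (j + k)) = (∑' i, ε i) - ∑ i ∈ Finset.range k, ε i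
      linarith
    have : Tendsto (fun k => (∑' i, ε i) - ∑ i ∈ Finset.range k, ε i) atTop
        (nhds ((∑' i, ε i) - ∑' i, ε i)) := tendsto_const_nhds.sub hpartial
    simp only [sub_self] at this
    exact (by simpa only [← heq] using this)
  refine ⟨⨅ k, b k, ?_⟩
  have : Tendsto (fun k => b k - t k) atTop (nhds ((⨅ k, b k) - 0)) := hbconv.sub htz
  simpa only [hb, add_sub_cancel_right, sub_zero] using this

lemma weak_compactness {H : Type} [NormedAddCommGroup H] [InnerProductSpace ℝ H]
    [CompleteSpace H] (u : ℕ → H) (C : ℝ) (hC : 0 ≤ C) (hb : ∀ n, ‖u n‖ ≤ C) :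
    ∃ (l : H) (φ : ℕ → ℕ), StrictMono φ ∧ WeakConv (fun j => u (φ j)) l := by
  classical
  set K : Submodule ℝ H := (Submodule.span ℝ (Set.range u)).topologicalClosure with hK
  have humem : ∀ n, u n ∈ K :=
    fun n => Submodule.le_topologicalClosure _ (Submodule.subset_span ⟨n, rfl⟩)
  have hKclosed : IsClosed (K : Set H) := Submodule.isClosed_topologicalClosure _
  haveI : CompleteSpace K := hKclosed.completeSpace_coe
  -- separability: countable set whose closure contains K
  have hsep : TopologicalSpace.IsSeparable (K : Set H) := by
    have h1 : TopologicalSpace.IsSeparable (Set.range u) :=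
      (Set.countable_range u).isSeparable
    have h2 := h1.span (R := ℝ)
    have h3 := h2.closure
    have : (K : Set H) = closure ((Submodule.span ℝ (Set.range u) : Submodule ℝ H) : Set H) :=
      rfl
    rw [this]; exact h3
  obtain ⟨c, hc_count, hc_sub⟩ := hsep
  have hc_ne : (insert (0 : H) c).Nonempty := ⟨0, Set.mem_insert _ _⟩
  obtain ⟨d, hd⟩ := Set.Countable.exists_eq_range (hc_count.insert 0) hc_ne
  have hdense : ∀ w : H, w ∈ K → ∀ ε : ℝ, 0 < ε → ∃ m : ℕ, ‖w - d m‖ < ε := by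
    intro w hw ε hε
    have hw' : w ∈ closure (insert (0:H) c) :=
      closure_mono (Set.subset_insert _ _) (hc_sub hw)
    rw [Metric.mem_closure_iff] at hw'
    obtain ⟨b, hbmem, hbd⟩ := hw' ε hε
    rw [hd] at hbmem
    obtain ⟨m, rfl⟩ := hbmem
    exact ⟨m, by rwa [← dist_eq_norm]⟩
  -- the compact product space
  have hmem : ∀ n m, ⟪u n, d m⟫_ℝ ∈ Set.Icc (-(C * ‖d m‖)) (C * ‖d m‖) := by
    intro n m
    have h1 : |⟪u n, d m⟫_ℝ| ≤ ‖u n‖ * ‖d m‖ := abs_real_inner_le_norm _ _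
    have h2 : ‖u n‖ * ‖d m‖ ≤ C * ‖d m‖ :=
      mul_le_mul_of_nonneg_right (hb n) (norm_nonneg _)
    constructor <;> [linarith [neg_abs_le ⟪u n, d m⟫_ℝ]; linarith [le_abs_self ⟪u n, d m⟫_ℝ]]
  haveI : ∀ m : ℕ, CompactSpace (Set.Icc (-(C * ‖d m‖)) (C * ‖d m‖)) :=
    fun m => isCompact_iff_compactSpace.mp isCompact_Icc
  set F : ℕ → (∀ m : ℕ, Set.Icc (-(C * ‖d m‖)) (C * ‖d m‖)) :=
    fun n m => ⟨⟪u n, d m⟫_ℝ, hmem n m⟩ with hF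
  obtain ⟨g, φ, hφ, hconv⟩ := SeqCompactSpace.tendsto_subseq F
  have hcoord : ∀ m, Tendsto (fun j => ⟪u (φ j), d m⟫_ℝ) atTop (nhds ((g m : ℝ))) := by
    intro m
    have h1 : Tendsto (fun j => (F ∘ φ) j m) atTop (nhds (g m)) :=
      (tendsto_pi_nhds.mp hconv) m
    exact (continuous_subtype_val.tendsto (g m)).comp h1
  -- Cauchy for every w ∈ K
  have hcauchy : ∀ w : H, w ∈ K → CauchySeq fun j => ⟪u (φ j), w⟫_ℝ := by
    intro w hw
    rw [Metric.cauchySeq_iff]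
    intro ε hε
    obtain ⟨m, hm⟩ := hdense w hw (ε / (3 * (C + 1))) (by positivity)
    have hcm : CauchySeq fun j => ⟪u (φ j), d m⟫_ℝ := (hcoord m).cauchySeq
    rw [Metric.cauchySeq_iff] at hcm
    obtain ⟨N, hN⟩ := hcm (ε / 3) (by positivity)
    refine ⟨N, fun i hi j hj => ?_⟩
    have hdiff : ∀ n : ℕ, |⟪u n, w⟫_ℝ - ⟪u n, d m⟫_ℝ| ≤ C * (ε / (3 * (C + 1))) := by
      intro n
      have : ⟪u n, w⟫_ℝ - ⟪u n, d m⟫_ℝ = ⟪u n, w - d m⟫_ℝ := by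
        rw [inner_sub_right]
      rw [this]
      calc |⟪u n, w - d m⟫_ℝ| ≤ ‖u n‖ * ‖w - d m‖ := abs_real_inner_le_norm _ _
        _ ≤ C * (ε / (3 * (C + 1))) := by
            apply mul_le_mul (hb n) (le_of_lt hm) (norm_nonneg _) hC
    have hCe : C * (ε / (3 * (C + 1))) ≤ ε / 3 := by
      rw [← mul_div_assoc, div_le_div_iff₀ (by positivity) (by norm_num : (0:ℝ) < 3)]
      nlinarith [hε.le, hC]
    have h1 := hdiff (φ i)
    have h2 := hdiff (φ j)
    have h3 := hN i hi j hj
    rw [Real.dist_eq] at h3 ⊢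
    have t1 := abs_sub_le (⟪u (φ i), w⟫_ℝ) (⟪u (φ i), d m⟫_ℝ) (⟪u (φ j), w⟫_ℝ)
    have t2 := abs_sub_le (⟪u (φ i), d m⟫_ℝ) (⟪u (φ j), d m⟫_ℝ) (⟪u (φ j), w⟫_ℝ)
    have t3 : |⟪u (φ j), d m⟫_ℝ - ⟪u (φ j), w⟫_ℝ| = |⟪u (φ j), w⟫_ℝ - ⟪u (φ j), d m⟫_ℝ| :=
      abs_sub_comm _ _
    linarith
  -- limits exist for every w
  have hlim : ∀ w : H, ∃ r : ℝ, Tendsto (fun j => ⟪u (φ j), w⟫_ℝ) atTop (nhds r) := by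
    intro w
    set p : H := (K.starProjection w : H) with hp
    have hpK : p ∈ K := K.starProjection_apply_mem w
    obtain ⟨r, hr⟩ := cauchySeq_tendsto_of_complete (hcauchy p hpK)
    refine ⟨r, ?_⟩
    have heq : ∀ n, ⟪u n, w⟫_ℝ = ⟪u n, p⟫_ℝ := by
      intro n
      have horth : w - p ∈ Kᗮ := K.sub_starProjection_mem_orthogonal w
      have h0 : ⟪u n, w - p⟫_ℝ = 0 := (Submodule.mem_orthogonal K (w - p)).mp horth (u n) (humem n)
      have : ⟪u n, w⟫_ℝ - ⟪u n, p⟫_ℝ = ⟪u n, w - p⟫_ℝ := by rw [inner_sub_right]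
      linarith
    simpa only [heq] using hr
  choose r hr using hlim
  -- r is a bounded linear functional
  have hradd : ∀ w w' : H, r (w + w') = r w + r w' := by
    intro w w'
    have h1 : Tendsto (fun j => ⟪u (φ j), w⟫_ℝ + ⟪u (φ j), w'⟫_ℝ) atTop (nhds (r w + r w')) :=
      (hr w).add (hr w')
    have h2 : Tendsto (fun j => ⟪u (φ j), w + w'⟫_ℝ) atTop (nhds (r w + r w')) := by
      simpa only [inner_add_right] using h1
    exact tendsto_nhds_unique (hr (w + w')) h2
  have hrsmul : ∀ (t : ℝ) (w : H), r (t • w) = t * r w := by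
    intro t w
    have h1 : Tendsto (fun j => t * ⟪u (φ j), w⟫_ℝ) atTop (nhds (t * r w)) :=
      (hr w).const_mul t
    have h2 : Tendsto (fun j => ⟪u (φ j), t • w⟫_ℝ) atTop (nhds (t * r w)) := by
      simpa only [real_inner_smul_right] using h1
    exact tendsto_nhds_unique (hr (t • w)) h2
  have hrbound : ∀ w : H, |r w| ≤ C * ‖w‖ := by
    intro w
    refine le_of_tendsto (hr w).abs (Filter.Eventually.of_forall fun j => ?_)
    calc |⟪u (φ j), w⟫_ℝ| ≤ ‖u (φ j)‖ * ‖w‖ := abs_real_inner_le_norm _ _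
      _ ≤ C * ‖w‖ := mul_le_mul_of_nonneg_right (hb _) (norm_nonneg _)
  set f₀ : H →ₗ[ℝ] ℝ :=
    { toFun := r, map_add' := hradd, map_smul' := hrsmul } with hf₀
  set f : H →L[ℝ] ℝ := LinearMap.mkContinuous f₀ C
    (fun w => by simpa [Real.norm_eq_abs, hf₀] using hrbound w) with hf
  refine ⟨(InnerProductSpace.toDual ℝ H).symm f, φ, hφ, fun w => ?_⟩
  have : ⟪(InnerProductSpace.toDual ℝ H).symm f, w⟫_ℝ = f w :=
    InnerProductSpace.toDual_symm_apply
  rw [this]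
  exact hr w


section Aux2
variable {H : Type} [NormedAddCommGroup H] [InnerProductSpace ℝ H]

lemma key_id (A : H →L[ℝ] H) (hs : ∀ x y : H, ⟪A x, y⟫_ℝ = ⟪x, A y⟫_ℝ) (p q z : H) :
    ⟪A (p - z), p - z⟫_ℝ - ⟪A (q - z), q - z⟫_ℝ - ⟪A (p - q), p - q⟫_ℝ
      = 2 * ⟪A (p - q), q - z⟫_ℝ := by
  have hpq : ⟪A p, q⟫_ℝ = ⟪A q, p⟫_ℝ := by rw [hs p q, real_inner_comm]
  have hpz : ⟪A p, z⟫_ℝ = ⟪A z, p⟫_ℝ := by rw [hs p z, real_inner_comm]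
  have hqz : ⟪A q, z⟫_ℝ = ⟪A z, q⟫_ℝ := by rw [hs q z, real_inner_comm]
  simp only [map_sub, inner_sub_left, inner_sub_right]
  linarith

lemma opial_id (A : H →L[ℝ] H) (hs : ∀ x y : H, ⟪A x, y⟫_ℝ = ⟪x, A y⟫_ℝ) (p w₁ w₂ : H) :
    2 * ⟪A p, w₁ - w₂⟫_ℝ = ⟪A (p - w₂), p - w₂⟫_ℝ - ⟪A (p - w₁), p - w₁⟫_ℝ
      - ⟪A w₂, w₂⟫_ℝ + ⟪A w₁, w₁⟫_ℝ := by
  have h1 : ⟪A p, w₁⟫_ℝ = ⟪A w₁, p⟫_ℝ := by rw [hs p w₁, real_inner_comm]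
  have h2 : ⟪A p, w₂⟫_ℝ = ⟪A w₂, p⟫_ℝ := by rw [hs p w₂, real_inner_comm]
  simp only [map_sub, inner_sub_left, inner_sub_right]
  linarith

end Aux2

/-- Weak convergence of the degenerate variable metric proximal point algorithm
for a maximal monotone operator T. -/
theorem stmt8 {H : Type} [NormedAddCommGroup H] [InnerProductSpace ℝ H] [CompleteSpace H]
    (T : H → Set H)
    -- T monotone:
    (hTmono : ∀ u₁ v₁ u₂ v₂ : H, v₁ ∈ T u₁ → v₂ ∈ T u₂ → 0 ≤ ⟪u₁ - u₂, v₁ - v₂⟫_ℝ)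
    -- T maximal:
    (hTmax : ∀ u v : H, (∀ u' v' : H, v' ∈ T u' → 0 ≤ ⟪u - u', v - v'⟫_ℝ) → v ∈ T u)
    (hzer : ∃ z : H, (0 : H) ∈ T z)
    (M : ℕ → H →L[ℝ] H) (Mlim : H →L[ℝ] H)
    (hsa : ∀ k, IsSelfAdjoint (M k)) (hpsd : ∀ k, ∀ x : H, 0 ≤ ⟪M k x, x⟫_ℝ)
    (hsalim : IsSelfAdjoint Mlim) (hpsdlim : ∀ x : H, 0 ≤ ⟪Mlim x, x⟫_ℝ)
    (hconv : Filter.Tendsto M Filter.atTop (nhds Mlim))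
    (hsum : Summable (fun k => ‖M (k + 1) - M k‖))
    (L : ℝ)
    -- each (M_k + T)⁻¹ is L-Lipschitz:
    (hLip : ∀ k, ∀ x₁ x₂ y₁ y₂ : H, x₁ - M k y₁ ∈ T y₁ → x₂ - M k y₂ ∈ T y₂ →
      ‖y₁ - y₂‖ ≤ L * ‖x₁ - x₂‖)
    -- admissibility: J k = (M_k + T)⁻¹ M_k single-valued with full domain:
    (J : ℕ → H → H)
    (hJ : ∀ k x, M k x - M k (J k x) ∈ T (J k x))
    (hJuniq : ∀ k x v, M k x - M k v ∈ T v → v = J k x)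
    (Jlim : H → H)
    (hJlim : ∀ x, Mlim x - Mlim (Jlim x) ∈ T (Jlim x))
    (hJlimuniq : ∀ x v, Mlim x - Mlim v ∈ T v → v = Jlim x)
    (u : ℕ → H) (hu : ∀ k, u (k + 1) = J k (u k)) :
    ∃ l : H, (0 : H) ∈ T l ∧ WeakConv u l := by
  classical
  have hsym : ∀ k, ∀ x y : H, ⟪M k x, y⟫_ℝ = ⟪x, M k y⟫_ℝ := fun k x y =>
    (ContinuousLinearMap.isSelfAdjoint_iff_isSymmetric.mp (hsa k)) x y
  have hsymlim : ∀ x y : H, ⟪Mlim x, y⟫_ℝ = ⟪x, Mlim y⟫_ℝ := fun x y =>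
    (ContinuousLinearMap.isSelfAdjoint_iff_isSymmetric.mp hsalim) x y
  obtain ⟨z₀, hz₀⟩ := hzer
  -- uniform bound on ‖M k‖
  obtain ⟨CM₀, hCM₀⟩ := (hconv.norm).bddAbove_range
  set CM : ℝ := max CM₀ 0 with hCMdef
  have hCM : ∀ k, ‖M k‖ ≤ CM := fun k =>
    le_trans (hCM₀ ⟨k, rfl⟩) (le_max_left _ _)
  have hCM0 : (0:ℝ) ≤ CM := le_max_right _ _
  have hLCM : (0:ℝ) ≤ L ^ 2 * CM := mul_nonneg (sq_nonneg L) hCM0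
  have hTmem : ∀ k, M k (u k) - M k (u (k + 1)) ∈ T (u (k + 1)) := by
    intro k; have h := hJ k (u k); rwa [← hu k] at h
  set Q : ℕ → H → ℝ := fun k x => ⟪M k x, x⟫_ℝ with hQ
  have hQnn : ∀ k (x : H), 0 ≤ Q k x := fun k x => hpsd k x
  set δ : ℕ → ℝ := fun k => ‖M (k + 1) - M k‖ with hδ
  have hδnn : ∀ k, (0:ℝ) ≤ δ k := fun k => norm_nonneg _
  have hδsum : Summable δ := hsum
  -- Fejér inequality
  have hFejer : ∀ z, (0:H) ∈ T z → ∀ k,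
      Q k (u (k + 1) - z) + Q k (u k - u (k + 1)) ≤ Q k (u k - z) := by
    intro z hz k
    have hmono := hTmono (u (k + 1)) (M k (u k) - M k (u (k + 1))) z 0 (hTmem k) hz
    have h2 : ⟪u (k + 1) - z, M k (u k) - M k (u (k + 1)) - 0⟫_ℝ
        = ⟪M k (u k - u (k + 1)), u (k + 1) - z⟫_ℝ := by
      rw [sub_zero, ← map_sub, real_inner_comm]
    rw [h2] at hmono
    have hid := key_id (M k) (hsym k) (u k) (u (k + 1)) z
    simp only [hQ]
    linarith
  -- Lipschitz consequence
  have hLipstep : ∀ z, (0:H) ∈ T z → ∀ k, ‖u (k + 1) - z‖ ≤ L * ‖M k (u k - z)‖ := by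
    intro z hz k
    have h2 : M k z - M k z ∈ T z := by rwa [sub_self]
    have h := hLip k (M k (u k)) (M k z) (u (k + 1)) z (hTmem k) h2
    rwa [← map_sub] at h
  have hsq : ∀ z, (0:H) ∈ T z → ∀ k,
      ‖u (k + 1) - z‖ ^ 2 ≤ L ^ 2 * CM * Q k (u k - z) := by
    intro z hz k
    have h1 := hLipstep z hz k
    have h2 : ‖M k (u k - z)‖ ^ 2 ≤ ‖M k‖ * Q k (u k - z) :=
      psd_norm_sq (M k) (hsym k) (hpsd k) (u k - z)
    have h3 : ‖M k‖ ≤ CM := hCM k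
    have h4 : 0 ≤ Q k (u k - z) := hQnn k _
    have h5 : ‖u (k + 1) - z‖ ^ 2 ≤ (L * ‖M k (u k - z)‖) ^ 2 :=
      pow_le_pow_left₀ (norm_nonneg _) h1 2
    have h6 : (L * ‖M k (u k - z)‖) ^ 2 = L ^ 2 * ‖M k (u k - z)‖ ^ 2 := by ring
    have h7 : L ^ 2 * ‖M k (u k - z)‖ ^ 2 ≤ L ^ 2 * (‖M k‖ * Q k (u k - z)) :=
      mul_le_mul_of_nonneg_left h2 (sq_nonneg L)
    have h8 : ‖M k‖ * Q k (u k - z) ≤ CM * Q k (u k - z) :=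
      mul_le_mul_of_nonneg_right h3 h4
    have h9 : L ^ 2 * (‖M k‖ * Q k (u k - z)) ≤ L ^ 2 * (CM * Q k (u k - z)) :=
      mul_le_mul_of_nonneg_left h8 (sq_nonneg L)
    have h10 : L ^ 2 * (CM * Q k (u k - z)) = L ^ 2 * CM * Q k (u k - z) := by ring
    linarith
  -- metric drift
  have hdrift : ∀ k (x : H), Q (k + 1) x ≤ Q k x + δ k * ‖x‖ ^ 2 := by
    intro k x
    have h1 : ⟪M (k + 1) x, x⟫_ℝ - ⟪M k x, x⟫_ℝ = ⟪(M (k + 1) - M k) x, x⟫_ℝ := by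
      rw [ContinuousLinearMap.sub_apply, inner_sub_left]
    have h2 : ⟪(M (k + 1) - M k) x, x⟫_ℝ ≤ ‖(M (k + 1) - M k) x‖ * ‖x‖ :=
      real_inner_le_norm _ _
    have h3 : ‖(M (k + 1) - M k) x‖ ≤ ‖M (k + 1) - M k‖ * ‖x‖ :=
      (M (k + 1) - M k).le_opNorm x
    have h4 : ‖(M (k + 1) - M k) x‖ * ‖x‖ ≤ ‖M (k + 1) - M k‖ * ‖x‖ * ‖x‖ :=
      mul_le_mul_of_nonneg_right h3 (norm_nonneg x)
    have h5 : δ k * ‖x‖ ^ 2 = ‖M (k + 1) - M k‖ * ‖x‖ * ‖x‖ := by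
      simp only [hδ]; ring
    simp only [hQ]
    linarith
  -- one-step recursion for any zero
  have hrec : ∀ z, (0:H) ∈ T z → ∀ k,
      Q (k + 1) (u (k + 1) - z) ≤ Q k (u k - z) - Q k (u k - u (k + 1))
        + δ k * (L ^ 2 * CM * Q k (u k - z)) := by
    intro z hz k
    have h1 := hdrift k (u (k + 1) - z)
    have h2 := hFejer z hz k
    have h3 := hsq z hz k
    have h4 : δ k * ‖u (k + 1) - z‖ ^ 2 ≤ δ k * (L ^ 2 * CM * Q k (u k - z)) :=
      mul_le_mul_of_nonneg_left h3 (hδnn k)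
    linarith
  -- uniform bound on Q k (u k - z)
  have hbound : ∀ z, (0:H) ∈ T z → ∀ k,
      Q k (u k - z) ≤ Q 0 (u 0 - z) * Real.exp (L ^ 2 * CM * ∑' j, δ j) := by
    intro z hz
    have hpartial : ∀ k, Q k (u k - z)
        ≤ Q 0 (u 0 - z) * Real.exp (L ^ 2 * CM * ∑ j ∈ Finset.range k, δ j) := by
      intro k
      induction k with
      | zero => simp
      | succ k ih =>
        have hstep : Q (k + 1) (u (k + 1) - z)
            ≤ (1 + L ^ 2 * CM * δ k) * Q k (u k - z) := by
          have h1 := hrec z hz k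
          have h2 := hQnn k (u k - u (k + 1))
          have h3 : (1 + L ^ 2 * CM * δ k) * Q k (u k - z)
              = Q k (u k - z) + δ k * (L ^ 2 * CM * Q k (u k - z)) := by ring
          linarith
        have hexp : (1 + L ^ 2 * CM * δ k) ≤ Real.exp (L ^ 2 * CM * δ k) := by
          have := Real.add_one_le_exp (L ^ 2 * CM * δ k); linarith
        calc Q (k + 1) (u (k + 1) - z) ≤ (1 + L ^ 2 * CM * δ k) * Q k (u k - z) := hstep
          _ ≤ Real.exp (L ^ 2 * CM * δ k)
              * (Q 0 (u 0 - z) * Real.exp (L ^ 2 * CM * ∑ j ∈ Finset.range k, δ j)) :=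
            mul_le_mul hexp ih (hQnn _ _) (le_of_lt (Real.exp_pos _))
          _ = Q 0 (u 0 - z) * Real.exp (L ^ 2 * CM * ∑ j ∈ Finset.range (k + 1), δ j) := by
            rw [Finset.sum_range_succ, mul_add, Real.exp_add]; ring
    intro k
    have h1 := hpartial k
    have h2 : ∑ j ∈ Finset.range k, δ j ≤ ∑' j, δ j :=
      Summable.sum_le_tsum _ (fun i _ => hδnn i) hδsum
    have h3 : Real.exp (L ^ 2 * CM * ∑ j ∈ Finset.range k, δ j)
        ≤ Real.exp (L ^ 2 * CM * ∑' j, δ j) :=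
      Real.exp_le_exp.mpr (mul_le_mul_of_nonneg_left h2 hLCM)
    have h4 := mul_le_mul_of_nonneg_left h3 (hQnn 0 (u 0 - z))
    linarith
  -- convergence of Q k (u k - z) for any zero z
  have hQconv : ∀ z, (0:H) ∈ T z →
      ∃ E, Filter.Tendsto (fun k => Q k (u k - z)) Filter.atTop (nhds E) := by
    intro z hz
    have hBnn : 0 ≤ Q 0 (u 0 - z) * Real.exp (L ^ 2 * CM * ∑' j, δ j) :=
      mul_nonneg (hQnn _ _) (le_of_lt (Real.exp_pos _))
    apply quasiFejer (fun k => Q k (u k - z))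
      (fun k => δ k * (L ^ 2 * CM * (Q 0 (u 0 - z) * Real.exp (L ^ 2 * CM * ∑' j, δ j))))
      (fun k => hQnn _ _)
      (fun k => mul_nonneg (hδnn k) (mul_nonneg hLCM hBnn))
      (hδsum.mul_right _)
    intro k
    have h1 := hrec z hz k
    have h2 : δ k * (L ^ 2 * CM * Q k (u k - z))
        ≤ δ k * (L ^ 2 * CM * (Q 0 (u 0 - z) * Real.exp (L ^ 2 * CM * ∑' j, δ j))) :=
      mul_le_mul_of_nonneg_left
        (mul_le_mul_of_nonneg_left (hbound z hz k) hLCM) (hδnn k)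
    have h3 := hQnn k (u k - u (k + 1))
    linarith
  -- summability of the Fejér gaps for z₀
  set B₀ : ℝ := Q 0 (u 0 - z₀) * Real.exp (L ^ 2 * CM * ∑' j, δ j) with hB₀
  have hB₀nn : 0 ≤ B₀ := mul_nonneg (hQnn _ _) (le_of_lt (Real.exp_pos _))
  have hεsum : Summable (fun k => δ k * (L ^ 2 * CM * B₀)) := hδsum.mul_right _
  have hLCMB : (0:ℝ) ≤ L ^ 2 * CM * B₀ := mul_nonneg hLCM hB₀nn
  have hεnn : ∀ k, 0 ≤ δ k * (L ^ 2 * CM * B₀) :=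
    fun k => mul_nonneg (hδnn k) hLCMB
  have hqsum : Summable (fun k => Q k (u k - u (k + 1))) := by
    apply summable_of_sum_range_le
      (c := Q 0 (u 0 - z₀) + ∑' k, δ k * (L ^ 2 * CM * B₀)) (fun n => hQnn _ _)
    intro n
    have haux : ∀ n, (∑ k ∈ Finset.range n, Q k (u k - u (k + 1))) + Q n (u n - z₀)
        ≤ Q 0 (u 0 - z₀) + ∑ k ∈ Finset.range n, δ k * (L ^ 2 * CM * B₀) := by
      intro n
      induction n with
      | zero => simp
      | succ n ih =>
        have h1 := hrec z₀ hz₀ n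
        have h2 : δ n * (L ^ 2 * CM * Q n (u n - z₀)) ≤ δ n * (L ^ 2 * CM * B₀) :=
          mul_le_mul_of_nonneg_left
            (mul_le_mul_of_nonneg_left (hbound z₀ hz₀ n) hLCM) (hδnn n)
        rw [Finset.sum_range_succ, Finset.sum_range_succ]
        linarith
    have h1 := haux n
    have h2 : ∑ k ∈ Finset.range n, δ k * (L ^ 2 * CM * B₀)
        ≤ ∑' k, δ k * (L ^ 2 * CM * B₀) := Summable.sum_le_tsum _ (fun i _ => hεnn i) hεsum
    have h3 := hQnn n (u n - z₀)
    linarith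
  -- the operator residuals tend to zero strongly
  have hv0 : Filter.Tendsto (fun k => M k (u k - u (k + 1))) Filter.atTop (nhds 0) := by
    apply squeeze_zero_norm (a := fun k => Real.sqrt (CM * Q k (u k - u (k + 1))))
    · intro k
      have h1 : ‖M k (u k - u (k + 1))‖ ^ 2 ≤ ‖M k‖ * Q k (u k - u (k + 1)) :=
        psd_norm_sq (M k) (hsym k) (hpsd k) _
      have h2 : ‖M k (u k - u (k + 1))‖ ^ 2 ≤ CM * Q k (u k - u (k + 1)) :=
        le_trans h1 (mul_le_mul_of_nonneg_right (hCM k) (hQnn _ _))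
      exact (Real.le_sqrt (norm_nonneg _) (mul_nonneg hCM0 (hQnn _ _))).mpr h2
    · have h1 : Filter.Tendsto (fun k => CM * Q k (u k - u (k + 1)))
          Filter.atTop (nhds 0) := by
        simpa using hqsum.tendsto_atTop_zero.const_mul CM
      have h2 := (Real.continuous_sqrt.tendsto 0).comp h1
      simpa [Real.sqrt_zero, Function.comp_def] using h2
  -- bound on the iterates
  set R : ℝ := max ‖u 0‖ (Real.sqrt (L ^ 2 * CM * B₀) + ‖z₀‖) with hR
  have hub : ∀ n, ‖u n‖ ≤ R := by
    intro n
    match n with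
    | 0 => exact le_max_left _ _
    | (k + 1) =>
      have h1 : ‖u (k + 1) - z₀‖ ^ 2 ≤ L ^ 2 * CM * B₀ := by
        have := hsq z₀ hz₀ k
        have h2 : L ^ 2 * CM * Q k (u k - z₀) ≤ L ^ 2 * CM * B₀ :=
          mul_le_mul_of_nonneg_left (hbound z₀ hz₀ k) hLCM
        linarith
      have h2 : ‖u (k + 1) - z₀‖ ≤ Real.sqrt (L ^ 2 * CM * B₀) :=
        (Real.le_sqrt (norm_nonneg _) hLCMB).mpr h1
      calc ‖u (k + 1)‖ = ‖u (k + 1) - z₀ + z₀‖ := by rw [sub_add_cancel]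
        _ ≤ ‖u (k + 1) - z₀‖ + ‖z₀‖ := norm_add_le _ _
        _ ≤ Real.sqrt (L ^ 2 * CM * B₀) + ‖z₀‖ := by linarith
        _ ≤ R := le_max_right _ _
  have hR0 : (0:ℝ) ≤ R := le_trans (norm_nonneg (u 0)) (le_max_left _ _)
  -- pointwise convergence of the quadratic forms
  have hop : Filter.Tendsto (fun k => ‖M k - Mlim‖) Filter.atTop (nhds 0) :=
    tendsto_iff_norm_sub_tendsto_zero.mp hconv
  have happly : ∀ x : H, Filter.Tendsto (fun k => M k x) Filter.atTop (nhds (Mlim x)) := by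
    intro x
    rw [tendsto_iff_norm_sub_tendsto_zero]
    apply squeeze_zero_norm (a := fun k => ‖M k - Mlim‖ * ‖x‖)
    · intro k
      have h : M k x - Mlim x = (M k - Mlim) x := by
        rw [ContinuousLinearMap.sub_apply]
      rw [norm_norm, h]
      exact (M k - Mlim).le_opNorm x
    · simpa using hop.mul_const ‖x‖
  have hQtend : ∀ x : H, Filter.Tendsto (fun k => Q k x) Filter.atTop
      (nhds ⟪Mlim x, x⟫_ℝ) := by
    intro x
    exact (happly x).inner tendsto_const_nhds
  -- weak cluster points are zeros
  have hcluster : ∀ σ : ℕ → ℕ, (∀ j, 1 ≤ σ j) → Filter.Tendsto σ Filter.atTop Filter.atTop →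
      ∀ l' : H, WeakConv (fun j => u (σ j)) l' → (0:H) ∈ T l' := by
    intro σ hσ1 hσtop l' hwc
    apply hTmax l' 0
    intro u' v' hv'
    have hmsucc : ∀ j, σ j - 1 + 1 = σ j := fun j => by have := hσ1 j; omega
    have hmtop : Filter.Tendsto (fun j => σ j - 1) Filter.atTop Filter.atTop := by
      rw [Filter.tendsto_atTop_atTop] at hσtop ⊢
      intro b
      obtain ⟨N, hN⟩ := hσtop (b + 1)
      exact ⟨N, fun a ha => by have := hN a ha; omega⟩
    have hs : ∀ j, 0 ≤ ⟪u (σ j) - u',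
        M (σ j - 1) (u (σ j - 1) - u (σ j - 1 + 1)) - v'⟫_ℝ := by
      intro j
      have h0 := hTmono (u (σ j - 1 + 1))
        (M (σ j - 1) (u (σ j - 1)) - M (σ j - 1) (u (σ j - 1 + 1))) u' v'
        (hTmem (σ j - 1)) hv'
      rw [map_sub]
      rw [hmsucc j] at h0 ⊢
      exact h0
    have hvterm : Filter.Tendsto (fun j => M (σ j - 1) (u (σ j - 1) - u (σ j - 1 + 1)))
        Filter.atTop (nhds 0) := hv0.comp hmtop
    have t1 : Filter.Tendsto
        (fun j => ⟪u (σ j) - u', M (σ j - 1) (u (σ j - 1) - u (σ j - 1 + 1))⟫_ℝ)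
        Filter.atTop (nhds 0) := by
      apply squeeze_zero_norm
        (a := fun j => (R + ‖u'‖) * ‖M (σ j - 1) (u (σ j - 1) - u (σ j - 1 + 1))‖)
      · intro j
        have hn : ‖u (σ j) - u'‖ ≤ R + ‖u'‖ :=
          le_trans (norm_sub_le _ _) (by linarith [hub (σ j)])
        calc ‖⟪u (σ j) - u', M (σ j - 1) (u (σ j - 1) - u (σ j - 1 + 1))⟫_ℝ‖
            = |⟪u (σ j) - u', M (σ j - 1) (u (σ j - 1) - u (σ j - 1 + 1))⟫_ℝ| :=
              Real.norm_eq_abs _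
          _ ≤ ‖u (σ j) - u'‖ * ‖M (σ j - 1) (u (σ j - 1) - u (σ j - 1 + 1))‖ :=
              abs_real_inner_le_norm _ _
          _ ≤ (R + ‖u'‖) * ‖M (σ j - 1) (u (σ j - 1) - u (σ j - 1 + 1))‖ :=
              mul_le_mul_of_nonneg_right hn (norm_nonneg _)
      · simpa using (hvterm.norm).const_mul (R + ‖u'‖)
    have t2 : Filter.Tendsto (fun j => ⟪u (σ j) - u', v'⟫_ℝ) Filter.atTop
        (nhds ⟪l' - u', v'⟫_ℝ) := by
      have h1 := hwc v'
      have h2 := h1.sub_const ⟪u', v'⟫_ℝ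
      simpa only [← inner_sub_left] using h2
    have t3 : Filter.Tendsto
        (fun j => ⟪u (σ j) - u', M (σ j - 1) (u (σ j - 1) - u (σ j - 1 + 1)) - v'⟫_ℝ)
        Filter.atTop (nhds (0 - ⟪l' - u', v'⟫_ℝ)) := by
      have h := t1.sub t2
      simpa only [← inner_sub_right] using h
    have h4 : 0 ≤ 0 - ⟪l' - u', v'⟫_ℝ := ge_of_tendsto' t3 hs
    have h5 : ⟪l' - u', (0:H) - v'⟫_ℝ = 0 - ⟪l' - u', v'⟫_ℝ := by
      rw [inner_sub_right, inner_zero_right]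
    linarith
  -- uniqueness of weak subsequential limits (Opial)
  have huniq : ∀ (l₁ l₂ : H) (σ₁ σ₂ : ℕ → ℕ),
      Filter.Tendsto σ₁ Filter.atTop Filter.atTop →
      Filter.Tendsto σ₂ Filter.atTop Filter.atTop →
      (0:H) ∈ T l₁ → (0:H) ∈ T l₂ →
      WeakConv (fun j => u (σ₁ j)) l₁ → WeakConv (fun j => u (σ₂ j)) l₂ → l₁ = l₂ := by
    intro l₁ l₂ σ₁ σ₂ hσ₁ hσ₂ hzl₁ hzl₂ hw₁ hw₂
    obtain ⟨E₁, hE₁⟩ := hQconv l₁ hzl₁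
    obtain ⟨E₂, hE₂⟩ := hQconv l₂ hzl₂
    have haid : ∀ k, ⟪M k (u k), l₁ - l₂⟫_ℝ
        = (Q k (u k - l₂) - Q k (u k - l₁) - Q k l₂ + Q k l₁) / 2 := by
      intro k
      have := opial_id (M k) (hsym k) (u k) l₁ l₂
      simp only [hQ]
      linarith
    have hatend : Filter.Tendsto (fun k => ⟪M k (u k), l₁ - l₂⟫_ℝ) Filter.atTop
        (nhds ((E₂ - E₁ - ⟪Mlim l₂, l₂⟫_ℝ + ⟪Mlim l₁, l₁⟫_ℝ) / 2)) := by
      have h1 : Filter.Tendsto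
          (fun k => (Q k (u k - l₂) - Q k (u k - l₁) - Q k l₂ + Q k l₁) / 2) Filter.atTop
          (nhds ((E₂ - E₁ - ⟪Mlim l₂, l₂⟫_ℝ + ⟪Mlim l₁, l₁⟫_ℝ) / 2)) :=
        (((hE₂.sub hE₁).sub (hQtend l₂)).add (hQtend l₁)).div_const 2
      have h2 : (fun k => ⟪M k (u k), l₁ - l₂⟫_ℝ)
          = fun k => (Q k (u k - l₂) - Q k (u k - l₁) - Q k l₂ + Q k l₁) / 2 :=
        funext haid
      rw [h2]
      exact h1
    have hterm : Filter.Tendsto (fun k => ⟪u k, (Mlim - M k) (l₁ - l₂)⟫_ℝ)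
        Filter.atTop (nhds 0) := by
      apply squeeze_zero_norm (a := fun k => R * ‖(Mlim - M k) (l₁ - l₂)‖)
      · intro k
        calc ‖⟪u k, (Mlim - M k) (l₁ - l₂)⟫_ℝ‖
            = |⟪u k, (Mlim - M k) (l₁ - l₂)⟫_ℝ| := Real.norm_eq_abs _
          _ ≤ ‖u k‖ * ‖(Mlim - M k) (l₁ - l₂)‖ := abs_real_inner_le_norm _ _
          _ ≤ R * ‖(Mlim - M k) (l₁ - l₂)‖ :=
              mul_le_mul_of_nonneg_right (hub k) (norm_nonneg _)
      · have h1 : Filter.Tendsto (fun k => (Mlim - M k) (l₁ - l₂)) Filter.atTop (nhds 0) := by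
          apply squeeze_zero_norm (a := fun k => ‖M k - Mlim‖ * ‖l₁ - l₂‖)
          · intro k
            have h : ‖Mlim - M k‖ = ‖M k - Mlim‖ := norm_sub_rev _ _
            calc ‖(Mlim - M k) (l₁ - l₂)‖ ≤ ‖Mlim - M k‖ * ‖l₁ - l₂‖ :=
                (Mlim - M k).le_opNorm _
              _ = ‖M k - Mlim‖ * ‖l₁ - l₂‖ := by rw [h]
          · simpa using hop.mul_const ‖l₁ - l₂‖
        simpa using (h1.norm).const_mul R
    have hb : Filter.Tendsto (fun k => ⟪u k, Mlim (l₁ - l₂)⟫_ℝ) Filter.atTop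
        (nhds ((E₂ - E₁ - ⟪Mlim l₂, l₂⟫_ℝ + ⟪Mlim l₁, l₁⟫_ℝ) / 2)) := by
      have hsplit : ∀ k, ⟪u k, Mlim (l₁ - l₂)⟫_ℝ
          = ⟪M k (u k), l₁ - l₂⟫_ℝ + ⟪u k, (Mlim - M k) (l₁ - l₂)⟫_ℝ := by
        intro k
        have e1 : ⟪u k, (Mlim - M k) (l₁ - l₂)⟫_ℝ
            = ⟪u k, Mlim (l₁ - l₂)⟫_ℝ - ⟪u k, M k (l₁ - l₂)⟫_ℝ := by
          rw [ContinuousLinearMap.sub_apply, inner_sub_right]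
        have e2 : ⟪u k, M k (l₁ - l₂)⟫_ℝ = ⟪M k (u k), l₁ - l₂⟫_ℝ :=
          (hsym k (u k) (l₁ - l₂)).symm
        linarith
      have heq : (fun k => ⟪u k, Mlim (l₁ - l₂)⟫_ℝ)
          = fun k => ⟪M k (u k), l₁ - l₂⟫_ℝ + ⟪u k, (Mlim - M k) (l₁ - l₂)⟫_ℝ :=
        funext hsplit
      rw [heq]
      simpa using hatend.add hterm
    have e₁ : ⟪l₁, Mlim (l₁ - l₂)⟫_ℝ
        = (E₂ - E₁ - ⟪Mlim l₂, l₂⟫_ℝ + ⟪Mlim l₁, l₁⟫_ℝ) / 2 :=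
      tendsto_nhds_unique (hw₁ (Mlim (l₁ - l₂))) (hb.comp hσ₁)
    have e₂ : ⟪l₂, Mlim (l₁ - l₂)⟫_ℝ
        = (E₂ - E₁ - ⟪Mlim l₂, l₂⟫_ℝ + ⟪Mlim l₁, l₁⟫_ℝ) / 2 :=
      tendsto_nhds_unique (hw₂ (Mlim (l₁ - l₂))) (hb.comp hσ₂)
    have e3 : ⟪Mlim (l₁ - l₂), l₁ - l₂⟫_ℝ = 0 := by
      rw [real_inner_comm, inner_sub_left]
      linarith
    have e5 : ‖Mlim (l₁ - l₂)‖ ^ 2 ≤ 0 := by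
      have := psd_norm_sq Mlim hsymlim hpsdlim (l₁ - l₂)
      rw [e3, mul_zero] at this
      exact this
    have e6 : Mlim (l₁ - l₂) = 0 := by
      have h0 : ‖Mlim (l₁ - l₂)‖ ^ 2 = 0 := le_antisymm e5 (sq_nonneg _)
      have h1 : ‖Mlim (l₁ - l₂)‖ = 0 := by
        nlinarith [norm_nonneg (Mlim (l₁ - l₂))]
      exact norm_eq_zero.mp h1
    have e7 : Mlim l₂ - Mlim l₁ = 0 := by
      have h1 : Mlim l₁ - Mlim l₂ = 0 := by rw [← map_sub]; exact e6
      rw [← neg_sub, h1, neg_zero]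
    have f1 : l₁ = Jlim l₂ := hJlimuniq l₂ l₁ (by rw [e7]; exact hzl₁)
    have f2 : l₂ = Jlim l₂ := hJlimuniq l₂ l₂ (by rw [sub_self]; exact hzl₂)
    rw [f1, ← f2]
  -- extract the weak limit
  obtain ⟨l, φ, hφ, hwl⟩ := weak_compactness (fun j => u (j + 1)) R hR0 (fun j => hub (j + 1))
  have hσ₀top : Filter.Tendsto (fun j => φ j + 1) Filter.atTop Filter.atTop := by
    rw [Filter.tendsto_atTop_atTop]
    intro b
    exact ⟨b, fun j hj => by have := hφ.le_apply (x := j); omega⟩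
  have hl0 : (0:H) ∈ T l :=
    hcluster (fun j => φ j + 1) (fun j => Nat.succ_le_succ (Nat.zero_le _)) hσ₀top l hwl
  refine ⟨l, hl0, ?_⟩
  intro w
  by_contra hnot
  rw [Metric.tendsto_atTop] at hnot
  push_neg at hnot
  obtain ⟨ε, hε, hfreq⟩ := hnot
  obtain ⟨ψ, hψ, hψd⟩ :=
    Filter.extraction_of_frequently_atTop (Filter.frequently_atTop.mpr hfreq)
  obtain ⟨l₂, φ₂, hφ₂, hwl₂⟩ := weak_compactness (fun i => u (ψ (i + 1))) R hR0
    (fun i => hub (ψ (i + 1)))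
  have hσ₂top : Filter.Tendsto (fun i => ψ (φ₂ i + 1)) Filter.atTop Filter.atTop := by
    rw [Filter.tendsto_atTop_atTop]
    intro b
    refine ⟨b, fun i hi => ?_⟩
    have h1 : φ₂ i + 1 ≥ i + 1 := by have := hφ₂.le_apply (x := i); omega
    have h2 := hψ.le_apply (x := φ₂ i + 1)
    omega
  have hσ₂1 : ∀ i, 1 ≤ ψ (φ₂ i + 1) := by
    intro i
    have := hψ.le_apply (x := φ₂ i + 1)
    omega
  have hl₂0 : (0:H) ∈ T l₂ :=
    hcluster (fun i => ψ (φ₂ i + 1)) hσ₂1 hσ₂top l₂ hwl₂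
  have heql : l = l₂ :=
    huniq l l₂ (fun j => φ j + 1) (fun i => ψ (φ₂ i + 1)) hσ₀top hσ₂top hl0 hl₂0 hwl hwl₂
  have hc1 := hwl₂ w
  rw [← heql] at hc1
  rw [Metric.tendsto_atTop] at hc1
  obtain ⟨N, hN⟩ := hc1 ε hε
  have h1 := hN N le_rfl
  have h2 := hψd (φ₂ N + 1)
  simp only [Function.comp] at h1
  exact absurd h1 (not_lt.mpr h2)
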